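/- Let n ≥ 2 and let e_1, …, e_n be the standard basis of ℂⁿ. Define the n² − n + 1 orthonormal bases: B_0 with projections e_i e_i^† (i = 1, …, n); for each pair i < j the basis B_{ij} with projections (1/2)(e_i + e_j)(e_i + e_j)^†, (1/2)(e_i − e_j)(e_i − e_j)^†, and e_k e_k^† for k ≠ i, j; and for each pair i < j the basis B′_{ij} with projections (1/2)(e_i + i·e_j)(e_i + i·e_j)^†, (1/2)(e_i − i·e_j)(e_i − i·e_j)^†, and e_k e_k^† for k ≠ i, j. If ρ and σ are Hermitian n×n complex matrices with tr(ρ) = tr(σ) and tr(ρ P) = tr(σ P) for every projection P belonging to any of these bases, then ρ = σ. In particular, a density matrix is uniquely determined by its measurement probabilities in these n² − n + 1 bases. -/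
import Mathlib


open Matrix

/-- The standard basis vector `e_i` of `ℂⁿ`. -/
def stdVec {n : ℕ} (i : Fin n) : Fin n → ℂ := Pi.single i 1

/-- The rank-one orthogonal projection `v v^†` onto the line spanned by the unit
vector `v`; for a general vector `w` of norm `√2` the projection onto its line is
`(1/2) w w^†`, which is how the basis projections below are written. -/
def outer {n : ℕ} (v : Fin n → ℂ) : Matrix (Fin n) (Fin n) ℂ :=
  Matrix.vecMulVec v (star v)

/-- A Hermitian matrix with given trace is determined by its measurement probabilities
in the `n² − n + 1` bases `B₀` (the standard basis projections `e_i e_i^†`), `B_{ij}`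
(projections `(1/2)(e_i ± e_j)(e_i ± e_j)^†` together with `e_k e_k^†`, `k ≠ i, j`) and
`B′_{ij}` (projections `(1/2)(e_i ± i·e_j)(e_i ± i·e_j)^†` together with `e_k e_k^†`,
`k ≠ i, j`). -/
lemma trace_outer {n : ℕ} (A : Matrix (Fin n) (Fin n) ℂ) (v : Fin n → ℂ) :
    (A * outer v).trace = ∑ a, ∑ b, A a b * (v b * star (v a)) := by
  simp [Matrix.trace, Matrix.mul_apply, outer, Matrix.vecMulVec_apply, Matrix.diag, Pi.star_apply]

lemma trace_outer_std {n : ℕ} (A : Matrix (Fin n) (Fin n) ℂ) (i : Fin n) :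
    (A * outer (stdVec i)).trace = A i i := by
  simp [trace_outer, stdVec, Pi.single_apply, apply_ite, mul_ite, ite_mul,
    Finset.sum_ite_eq', Finset.sum_ite_eq]

lemma trace_outer_pair {n : ℕ} (A : Matrix (Fin n) (Fin n) ℂ) (i j : Fin n) (c : ℂ)
    (hij : i ≠ j) :
    (A * outer (stdVec i + c • stdVec j)).trace =
      A i i + c * A i j + star c * A j i + c * star c * A j j := by
  rw [trace_outer]
  simp only [stdVec, Pi.add_apply, Pi.smul_apply, Pi.single_apply, smul_eq_mul,
    star_add, star_mul', star_one, star_zero, mul_ite, mul_one, mul_zero,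
    ite_mul, zero_mul, one_mul, mul_add, add_mul]
  rw [Finset.sum_comm]
  simp [Finset.sum_add_distrib, Finset.mul_sum, Finset.sum_ite_eq, Finset.sum_ite_eq',
    apply_ite (starRingEnd ℂ), hij, hij.symm, mul_comm, mul_left_comm]
  ring

lemma pair_eq {n : ℕ} (ρ σ : Matrix (Fin n) (Fin n) ℂ) (i j : Fin n) (c : ℂ) (hij : i ≠ j)
    (h : (ρ * ((1 / 2 : ℂ) • outer (stdVec i + c • stdVec j))).trace =
         (σ * ((1 / 2 : ℂ) • outer (stdVec i + c • stdVec j))).trace)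
    (hii : ρ i i = σ i i) (hjj : ρ j j = σ j j) :
    c * ρ i j + star c * ρ j i = c * σ i j + star c * σ j i := by
  rw [Matrix.mul_smul, Matrix.mul_smul, Matrix.trace_smul, Matrix.trace_smul,
    trace_outer_pair ρ i j c hij, trace_outer_pair σ i j c hij] at h
  have h' := smul_right_injective ℂ (by norm_num : (1/2:ℂ) ≠ 0) h
  rw [hii, hjj] at h'
  linear_combination h'

theorem hermitian_determined_by_tomographic_bases {n : ℕ} (hn : 2 ≤ n)
    (ρ σ : Matrix (Fin n) (Fin n) ℂ)
    (hρ : ρ.IsHermitian) (hσ : σ.IsHermitian)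
    (htr : ρ.trace = σ.trace)
    (hdiag : ∀ i : Fin n,
      (ρ * outer (stdVec i)).trace = (σ * outer (stdVec i)).trace)
    (hre : ∀ i j : Fin n, i < j →
      (ρ * ((1 / 2 : ℂ) • outer (stdVec i + stdVec j))).trace =
        (σ * ((1 / 2 : ℂ) • outer (stdVec i + stdVec j))).trace ∧
      (ρ * ((1 / 2 : ℂ) • outer (stdVec i - stdVec j))).trace =
        (σ * ((1 / 2 : ℂ) • outer (stdVec i - stdVec j))).trace)
    (him : ∀ i j : Fin n, i < j →
      (ρ * ((1 / 2 : ℂ) • outer (stdVec i + Complex.I • stdVec j))).trace =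
        (σ * ((1 / 2 : ℂ) • outer (stdVec i + Complex.I • stdVec j))).trace ∧
      (ρ * ((1 / 2 : ℂ) • outer (stdVec i - Complex.I • stdVec j))).trace =
        (σ * ((1 / 2 : ℂ) • outer (stdVec i - Complex.I • stdVec j))).trace) :
    ρ = σ := by
  have hd : ∀ k, ρ k k = σ k k := fun k => by
    have h := hdiag k
    rwa [trace_outer_std, trace_outer_std] at h
  have key : ∀ i j : Fin n, i < j → ρ i j = σ i j ∧ ρ j i = σ j i := by
    intro i j hij
    have hne : i ≠ j := ne_of_lt hij
    have h1 := pair_eq ρ σ i j 1 hne (by simpa using (hre i j hij).1) (hd i) (hd j)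
    have h3 := pair_eq ρ σ i j Complex.I hne (him i j hij).1 (hd i) (hd j)
    simp only [one_mul, star_one] at h1
    rw [Complex.star_def, Complex.conj_I] at h3
    have hI : Complex.I ^ 2 = -1 := Complex.I_sq
    constructor
    · linear_combination (h1 - Complex.I * h3) / 2 +
        ((ρ i j - σ i j + σ j i - ρ j i) / 2) * hI
    · linear_combination (h1 + Complex.I * h3) / 2 +
        ((ρ j i - σ j i + σ i j - ρ i j) / 2) * hI
  ext i j
  rcases lt_trichotomy i j with h | h | h
  · exact (key i j h).1
  · subst h; exact hd i
  · exact (key j i h).2
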